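/- If C_M ⊆ GF(2)^n is a t-mineral-error-correcting code, and C ⊆ GF(2)^{n+1} is the set of all vectors obtained by prepending an arbitrary bit to a codeword of C_M, then C is a t-grain-error-correcting code of size 2|C_M|. -/

import Mathlib

/-- `e` is a `t`-grain-error for `x`: weight at most `t`, `e₁ = 0`, and an error at
position `i` (2 ≤ i ≤ n) requires `x_i ≠ x_{i-1}`. (0-indexed here.) -/
def grainError {n : ℕ} (t : ℕ) (x e : Fin n → ZMod 2) : Prop :=
  (Finset.univ.filter fun i => e i ≠ 0).card ≤ t ∧
  (∀ i : Fin n, (i : ℕ) = 0 → e i = 0) ∧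
  (∀ i : Fin n, 0 < (i : ℕ) → e i ≠ 0 →
    x i ≠ x ⟨(i : ℕ) - 1, lt_of_le_of_lt (Nat.sub_le _ _) i.isLt⟩)

/-- The grain error-ball `B_{t,G}(x)`. -/
def grainBall {n : ℕ} (t : ℕ) (x : Fin n → ZMod 2) : Set (Fin n → ZMod 2) :=
  {y | ∃ e, grainError t x e ∧ y = x + e}

/-- The number of runs of a binary vector. -/
def runs {n : ℕ} (x : Fin n → ZMod 2) : ℕ :=
  (if n = 0 then 0 else 1) +
  (Finset.univ.filter fun i : Fin n =>
    0 < (i : ℕ) ∧ x i ≠ x ⟨(i : ℕ) - 1, lt_of_le_of_lt (Nat.sub_le _ _) i.isLt⟩).card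

/-- `e` is a `t`-mineral-error for `x`: same as a grain-error but without the
requirement `e₁ = 0`. -/
def mineralError {n : ℕ} (t : ℕ) (x e : Fin n → ZMod 2) : Prop :=
  (Finset.univ.filter fun i => e i ≠ 0).card ≤ t ∧
  (∀ i : Fin n, 0 < (i : ℕ) → e i ≠ 0 →
    x i ≠ x ⟨(i : ℕ) - 1, lt_of_le_of_lt (Nat.sub_le _ _) i.isLt⟩)

/-- The mineral error-ball `B_{t,M}(x)`. -/
def mineralBall {n : ℕ} (t : ℕ) (x : Fin n → ZMod 2) : Set (Fin n → ZMod 2) :=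
  {y | ∃ e, mineralError t x e ∧ y = x + e}

def grainCorrecting {n : ℕ} (t : ℕ) (C : Finset (Fin n → ZMod 2)) : Prop :=
  ∀ x ∈ C, ∀ y ∈ C, x ≠ y → Disjoint (grainBall t x) (grainBall t y)

def mineralCorrecting {n : ℕ} (t : ℕ) (C : Finset (Fin n → ZMod 2)) : Prop :=
  ∀ x ∈ C, ∀ y ∈ C, x ≠ y → Disjoint (mineralBall t x) (mineralBall t y)

lemma tailMineral {n t : ℕ} {x e : Fin (n + 1) → ZMod 2} (h : grainError t x e) :
    mineralError t (fun i : Fin n => x i.succ) (fun i : Fin n => e i.succ) := by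
  obtain ⟨hw, h0, hp⟩ := h
  refine ⟨?_, ?_⟩
  · calc (Finset.univ.filter fun i : Fin n => e i.succ ≠ 0).card
        ≤ (Finset.univ.filter fun i : Fin (n + 1) => e i ≠ 0).card := by
          apply Finset.card_le_card_of_injOn (fun i => i.succ)
          · intro i hi; simp only [Finset.mem_filter, Finset.mem_univ, true_and] at hi ⊢
            simpa using hi
          · intro a _ b _ hab; exact Fin.succ_injective _ hab
      _ ≤ t := hw
  · intro i hi he
    have key := hp i.succ (by simp [Fin.val_succ]) he
    have heq : (⟨(i : ℕ) - 1, lt_of_le_of_lt (Nat.sub_le _ _) i.isLt⟩ : Fin n).succ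
        = (⟨((i.succ : Fin (n + 1)) : ℕ) - 1,
            lt_of_le_of_lt (Nat.sub_le _ _) (i.succ).isLt⟩ : Fin (n + 1)) := by
      apply Fin.ext
      simp only [Fin.val_succ]
      omega
    show x i.succ ≠ x (⟨(i : ℕ) - 1, lt_of_le_of_lt (Nat.sub_le _ _) i.isLt⟩ : Fin n).succ
    rw [heq]
    exact key

/-- Prepending an arbitrary bit to every codeword of a `t`-mineral-error-correcting
code yields a `t`-grain-error-correcting code of twice the size. -/
theorem stmt4 {n t : ℕ} (CM : Finset (Fin n → ZMod 2)) (h : mineralCorrecting t CM) :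
    grainCorrecting t (Finset.univ.filter fun x : Fin (n + 1) → ZMod 2 =>
        (fun i : Fin n => x i.succ) ∈ CM) ∧
    (Finset.univ.filter fun x : Fin (n + 1) → ZMod 2 =>
        (fun i : Fin n => x i.succ) ∈ CM).card = 2 * CM.card := by
  constructor
  · intro x hx y hy hxy
    simp only [Finset.mem_filter, Finset.mem_univ, true_and] at hx hy
    rw [Set.disjoint_left]
    rintro z ⟨e, he, rfl⟩ ⟨f, hf, hz⟩
    have h0 : x 0 = y 0 := by
      have h00 := congrFun hz 0
      simp only [Pi.add_apply, he.2.1 0 rfl, hf.2.1 0 rfl, add_zero] at h00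
      exact h00
    by_cases hxy' : (fun i : Fin n => x i.succ) = (fun i : Fin n => y i.succ)
    · apply hxy
      funext i
      refine Fin.cases h0 (fun j => congrFun hxy' j) i
    · have hd := h _ hx _ hy hxy'
      rw [Set.disjoint_left] at hd
      refine hd (a := fun i : Fin n => (x + e) i.succ)
        ⟨_, tailMineral he, by funext i; simp⟩
        ⟨_, tailMineral hf, ?_⟩
      funext i
      have := congrFun hz i.succ
      simp only [Pi.add_apply] at this ⊢
      exact this
  · have hcard : (Finset.univ.filter fun x : Fin (n + 1) → ZMod 2 =>
          (fun i : Fin n => x i.succ) ∈ CM).card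
        = ((Finset.univ : Finset (ZMod 2)) ×ˢ CM).card := by
      refine Finset.card_bij' (fun x _ => ((x 0, fun i : Fin n => x i.succ) :
          ZMod 2 × (Fin n → ZMod 2))) (fun p _ => Fin.cons p.1 p.2) ?_ ?_ ?_ ?_
      · intro x hx
        simp only [Finset.mem_filter, Finset.mem_univ, true_and] at hx
        simp [Finset.mem_product, hx]
      · intro p hp
        simp only [Finset.mem_product, Finset.mem_univ, true_and] at hp
        simp only [Finset.mem_filter, Finset.mem_univ, true_and, Fin.cons_succ]
        exact hp
      · intro x _
        exact Fin.cons_self_tail x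
      · intro p _
        simp
    rw [hcard, Finset.card_product]
    simp [mul_comm]
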